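/- Horospherical projections are base-point independent up to isometry of the image: for any two base points b, b′ ∈ ℍ^d (each not lying in the geodesic hull of p_1,…,p_K) and any x, y ∈ ℍ^d, one has d_ℍ(π^H_{b,p_1,…,p_K}(x), π^H_{b,p_1,…,p_K}(y)) = d_ℍ(π^H_{b′,p_1,…,p_K}(x), π^H_{b′,p_1,…,p_K}(y)). -/

import Mathlib

noncomputable section

open Set

/-- Ambient Euclidean space `ℝ^d`. -/
abbrev E (d : ℕ) : Type := EuclideanSpace ℝ (Fin d)

/-- The open unit (Poincaré) ball `ℍ^d`. -/
def pball (d : ℕ) : Set (E d) := {x | ‖x‖ < 1}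

/-- Inverse hyperbolic cosine. -/
def arcosh (t : ℝ) : ℝ := Real.log (t + Real.sqrt (t ^ 2 - 1))

/-- Hyperbolic distance in the Poincaré ball model. -/
def dH {d : ℕ} (x y : E d) : ℝ :=
  arcosh (1 + 2 * ‖x - y‖ ^ 2 / ((1 - ‖x‖ ^ 2) * (1 - ‖y‖ ^ 2)))

/-- A unit-speed parameterized complete geodesic of the Poincaré ball. -/
def IsUnitSpeedGeodesic {d : ℕ} (γ : ℝ → E d) : Prop :=
  (∀ t, γ t ∈ pball d) ∧ ∀ s t : ℝ, dH (γ s) (γ t) = |s - t|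

/-- A subset of the ball which is a complete geodesic line. -/
def IsGeodesicLine {d : ℕ} (c : Set (E d)) : Prop :=
  ∃ γ : ℝ → E d, IsUnitSpeedGeodesic γ ∧ c = Set.range γ

/-- Totally geodesic subset of the Poincaré ball: it contains every complete geodesic
through any two of its points. -/
def TotGeodesic {d : ℕ} (M : Set (E d)) : Prop :=
  M ⊆ pball d ∧
    ∀ x ∈ M, ∀ y ∈ M, x ≠ y →
      ∀ c : Set (E d), IsGeodesicLine c → x ∈ c → y ∈ c → c ⊆ M

/-- Geodesic hull of a set `S` of points of the ball and/or ideal boundary points: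
the smallest totally geodesic subset containing the ball-points of `S` and whose
closure contains all of `S` (in particular the ideal points of `S`). -/
def GH {d : ℕ} (S : Set (E d)) : Set (E d) :=
  ⋂₀ {M : Set (E d) | TotGeodesic M ∧ S ∩ pball d ⊆ M ∧ S ⊆ closure M}

/-- Busemann function of the ideal point `p`. -/
def busemann {d : ℕ} (p x : E d) : ℝ := Real.log (‖p - x‖ ^ 2 / (1 - ‖x‖ ^ 2))

/-- Horosphere centered at the ideal point `p` passing through `x`. -/
def horosphere {d : ℕ} (p x : E d) : Set (E d) :=
  {y ∈ pball d | busemann p y = busemann p x}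

/-- `S(x)`: intersection of the horospheres through `x` centered at the ideal points `p i`. -/
def horoInter {d K : ℕ} (p : Fin K → E d) (x : E d) : Set (E d) :=
  ⋂ i, horosphere (p i) x

/-- Isometry of hyperbolic space (Poincaré ball model). -/
def IsHypIsometry {d : ℕ} (φ : E d → E d) : Prop :=
  Set.BijOn φ (pball d) (pball d) ∧
    ∀ x ∈ pball d, ∀ y ∈ pball d, dH (φ x) (φ y) = dH x y

/-- A rotation around `P`: an isometry of `ℍ^d` fixing every point of `P`. -/
def IsRotationAround {d : ℕ} (P : Set (E d)) (φ : E d → E d) : Prop :=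
  IsHypIsometry φ ∧ ∀ q ∈ P, φ q = q

/-- `m` is a nearest point of `M` to `x`. -/
def IsNearestPt {d : ℕ} (M : Set (E d)) (x m : E d) : Prop :=
  m ∈ M ∧ ∀ y ∈ M, dH x m ≤ dH x y

/-- `π` is the geodesic (closest-point) projection onto `M`. -/
def IsGeodProj {d : ℕ} (M : Set (E d)) (π : E d → E d) : Prop :=
  ∀ x ∈ pball d, IsNearestPt M x (π x)

/-- `π` is the horospherical projection determined by the base point `b` and the
ideal points `p 0, …, p (K-1)`: it sends `x` to the point of
`GH(b,p₁,…,p_K) ∩ S(x)` strictly closer to `b` (and fixes the spine pointwise). -/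
def IsHoroProj {d K : ℕ} (b : E d) (p : Fin K → E d) (π : E d → E d) : Prop :=
  ∀ x ∈ pball d,
    π x ∈ GH (insert b (Set.range p)) ∩ horoInter p x ∧
    (∀ z ∈ GH (insert b (Set.range p)) ∩ horoInter p x, z ≠ π x → dH b (π x) < dH b z) ∧
    (x ∈ GH (Set.range p) → π x = x)

/-- Tangent directions at `c` of unit-speed geodesics contained in `M`. -/
def tangentDirs {d : ℕ} (M : Set (E d)) (c : E d) : Set (E d) :=
  {v | ∃ γ : ℝ → E d, IsUnitSpeedGeodesic γ ∧ Set.range γ ⊆ M ∧ γ 0 = c ∧ HasDerivAt γ v 0}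

/-- `x` and `y` lie on the same side of `L` inside the ball. -/
def SameSide {d : ℕ} (L : Set (E d)) (x y : E d) : Prop :=
  ∃ C : Set (E d), IsConnected C ∧ C ⊆ pball d \ L ∧ x ∈ C ∧ y ∈ C

/-- The (closed) half of `M` bounded by `P` that contains `b`. -/
def halfOf {d : ℕ} (M P : Set (E d)) (b : E d) : Set (E d) :=
  P ∪ connectedComponentIn (M \ P) b

/-- Hyperbolic length of a path `γ` with derivative `γ'` over `[a, b]`. -/
def hypLen {d : ℕ} (γ γ' : ℝ → E d) (a b : ℝ) : ℝ :=
  ∫ t in a..b, 2 * ‖γ' t‖ / (1 - ‖γ t‖ ^ 2)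

/-- `N ⊆ ℝ^d` is a `k`-dimensional topological submanifold (without boundary). -/
def IsTopSubmanifoldOfDim {d : ℕ} (k : ℕ) (N : Set (E d)) : Prop :=
  ∀ y ∈ N, ∃ U : Set (E d), IsOpen U ∧ y ∈ U ∧
    ∃ V : Set (EuclideanSpace ℝ (Fin k)), IsOpen V ∧ Nonempty (↥(U ∩ N) ≃ₜ ↥V)

/-- The model (closed) half-space of `ℝ^k`. -/
def modelHalfSpace (k : ℕ) : Set (EuclideanSpace ℝ (Fin k)) :=
  {v | ∀ i : Fin k, (i : ℕ) = 0 → 0 ≤ v i}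

/-- `N ⊆ ℝ^d` is a `k`-dimensional topological submanifold with boundary. -/
def IsTopSubmanifoldWithBdryOfDim {d : ℕ} (k : ℕ) (N : Set (E d)) : Prop :=
  ∀ y ∈ N, ∃ U : Set (E d), IsOpen U ∧ y ∈ U ∧
    ∃ V : Set (EuclideanSpace ℝ (Fin k)),
      (∃ W : Set (EuclideanSpace ℝ (Fin k)), IsOpen W ∧ V = W ∩ modelHalfSpace k) ∧
      Nonempty (↥(U ∩ N) ≃ₜ ↥V)

/-- Geodesically convex subset of the ball. -/
def GeodConvex {d : ℕ} (N : Set (E d)) : Prop :=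
  N ⊆ pball d ∧
    ∀ x ∈ N, ∀ y ∈ N, ∀ γ : ℝ → E d, IsUnitSpeedGeodesic γ →
      ∀ s t : ℝ, γ s = x → γ t = y → ∀ u ∈ Set.uIcc s t, γ u ∈ N

namespace Horo


variable {d : ℕ}

/-- Minkowski bilinear form on `ℝ × E d`. -/
def B (X Y : ℝ × E d) : ℝ := inner ℝ X.2 Y.2 - X.1 * Y.1

lemma B_symm (X Y : ℝ × E d) : B X Y = B Y X := by
  unfold B; rw [real_inner_comm]; ring

lemma B_add_left (X Y Z : ℝ × E d) : B (X + Y) Z = B X Z + B Y Z := by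
  simp only [B, inner_add_left, Prod.fst_add, Prod.snd_add]; ring

lemma B_add_right (X Y Z : ℝ × E d) : B X (Y + Z) = B X Y + B X Z := by
  simp only [B, inner_add_right, Prod.fst_add, Prod.snd_add]; ring

lemma B_smul_left (c : ℝ) (X Y : ℝ × E d) : B (c • X) Y = c * B X Y := by
  simp only [B, real_inner_smul_left, Prod.smul_fst, Prod.smul_snd, smul_eq_mul]; ring

lemma B_smul_right (c : ℝ) (X Y : ℝ × E d) : B X (c • Y) = c * B X Y := by
  simp only [B, real_inner_smul_right, Prod.smul_fst, Prod.smul_snd, smul_eq_mul]; ring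

lemma B_sub_left (X Y Z : ℝ × E d) : B (X - Y) Z = B X Z - B Y Z := by
  simp only [B, inner_sub_left, Prod.fst_sub, Prod.snd_sub]; ring

lemma B_sub_right (X Y Z : ℝ × E d) : B X (Y - Z) = B X Y - B X Z := by
  simp only [B, inner_sub_right, Prod.fst_sub, Prod.snd_sub]; ring

lemma B_zero_left (Y : ℝ × E d) : B 0 Y = 0 := by simp [B]

lemma B_zero_right (Y : ℝ × E d) : B Y 0 = 0 := by simp [B]

lemma B_self (X : ℝ × E d) : B X X = ‖X.2‖ ^ 2 - X.1 ^ 2 := by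
  unfold B; rw [real_inner_self_eq_norm_sq]; ring

lemma B_sum_left {n : ℕ} (f : Fin n → ℝ × E d) (Y : ℝ × E d) :
    B (∑ i, f i) Y = ∑ i, B (f i) Y := by
  classical
  induction n with
  | zero => simp [B_zero_left]
  | succ m ih =>
    rw [Fin.sum_univ_succ, B_add_left, ih, Fin.sum_univ_succ]

/-- Cauchy–Schwarz consequence: a vector orthogonal to a timelike vector is spacelike. -/
lemma B_pos_of_orth {X Y : ℝ × E d} (hY : B Y Y < 0) (hXY : B X Y = 0) (hX : X ≠ 0) :
    0 < B X X := by
  have hY2 : ‖Y.2‖ ^ 2 < Y.1 ^ 2 := by have := B_self Y; nlinarith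
  have hX2 : X.1 * Y.1 = inner ℝ X.2 Y.2 := by simp only [B] at hXY; linarith
  have hcs : |(inner ℝ X.2 Y.2 : ℝ)| ≤ ‖X.2‖ * ‖Y.2‖ := abs_real_inner_le_norm _ _
  rcases eq_or_ne X.2 0 with h2 | h2
  · exfalso
    apply hX
    have hY1 : Y.1 ≠ 0 := by intro h; rw [h] at hY2; simp at hY2; nlinarith [sq_nonneg ‖Y.2‖, norm_nonneg Y.2]
    have : X.1 = 0 := by
      have : X.1 * Y.1 = 0 := by rw [hX2, h2]; simp
      exact (mul_eq_zero.1 this).resolve_right hY1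
    exact Prod.ext this h2
  · have h2' : 0 < ‖X.2‖ := norm_pos_iff.2 h2
    rw [B_self]
    have hsq : (inner ℝ X.2 Y.2 : ℝ)^2 ≤ ‖X.2‖^2 * ‖Y.2‖^2 := by
      have := pow_le_pow_left₀ (abs_nonneg (inner ℝ X.2 Y.2 : ℝ)) hcs 2
      rw [sq_abs] at this; nlinarith
    have hY1sq : 0 < Y.1^2 := by nlinarith [sq_nonneg ‖Y.2‖, norm_nonneg Y.2]
    have h3 : X.1^2 * Y.1^2 = (inner ℝ X.2 Y.2 : ℝ)^2 := by rw [← hX2]; ring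
    have h4 : ‖X.2‖^2 * ‖Y.2‖^2 < ‖X.2‖^2 * Y.1^2 :=
      mul_lt_mul_of_pos_left hY2 (by positivity)
    nlinarith

lemma eq_zero_of_null_orth {X Y : ℝ × E d} (hY : B Y Y < 0) (hXY : B X Y = 0)
    (hXX : B X X ≤ 0) : X = 0 := by
  by_contra h
  exact absurd hXX (not_le.2 (B_pos_of_orth hY hXY h))

/-- Two future unit timelike vectors have negative pairing. -/
lemma B_neg_of_timelike {X Y : ℝ × E d} (hX : B X X = -1) (hY : B Y Y = -1)
    (hX1 : 0 < X.1) (hY1 : 0 < Y.1) : B X Y < 0 := by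
  have hX2 : ‖X.2‖ ^ 2 = X.1 ^ 2 - 1 := by have := B_self X; linarith
  have hY2 : ‖Y.2‖ ^ 2 = Y.1 ^ 2 - 1 := by have := B_self Y; linarith
  have hcs : (inner ℝ X.2 Y.2 : ℝ) ≤ ‖X.2‖ * ‖Y.2‖ :=
    le_trans (le_abs_self _) (abs_real_inner_le_norm _ _)
  have : (‖X.2‖ * ‖Y.2‖)^2 < (X.1 * Y.1)^2 := by
    have := norm_nonneg X.2; have := norm_nonneg Y.2
    nlinarith
  have hns : ‖X.2‖ * ‖Y.2‖ < X.1 * Y.1 := by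
    nlinarith [mul_nonneg (norm_nonneg X.2) (norm_nonneg Y.2), mul_pos hX1 hY1]
  simp only [B]
  linarith

/-- Upper-sheet detection. -/
lemma fst_pos_of_B_neg {X Y : ℝ × E d} (hX : B X X = -1) (hY : B Y Y < 0)
    (hY1 : 0 < Y.1) (hXY : B X Y < 0) : 0 < X.1 := by
  by_contra h
  push_neg at h
  have hX2 : ‖X.2‖ ^ 2 = X.1 ^ 2 - 1 := by have := B_self X; linarith
  have hY2 : ‖Y.2‖ ^ 2 < Y.1 ^ 2 := by have := B_self Y; nlinarith
  have hip : (inner ℝ X.2 Y.2 : ℝ) < X.1 * Y.1 := by simp only [B] at hXY; linarith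
  have hXY0 : X.1 * Y.1 ≤ 0 := mul_nonpos_iff.2 (Or.inr ⟨h, le_of_lt hY1⟩)
  have hcs : |(inner ℝ X.2 Y.2 : ℝ)| ≤ ‖X.2‖ * ‖Y.2‖ := abs_real_inner_le_norm _ _
  rcases eq_or_ne X.2 0 with h2 | h2
  · rw [h2] at hip; simp at hip
    nlinarith [sq_nonneg X.1]
  · have h2' : 0 < ‖X.2‖ := norm_pos_iff.2 h2
    have hy2' : ‖Y.2‖ < Y.1 := by nlinarith [norm_nonneg Y.2]
    have : -(inner ℝ X.2 Y.2 : ℝ) ≤ ‖X.2‖ * ‖Y.2‖ := by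
      have := neg_abs_le (inner ℝ X.2 Y.2 : ℝ); linarith
    -- |X.1| ≥ 1 in fact; ‖X.2‖² = X.1² - 1 ≤ X.1²
    have hX1' : ‖X.2‖ ^2 ≤ X.1 ^ 2 := by linarith
    nlinarith [mul_pos h2' hY1]

end Horo

namespace Horo
variable {d : ℕ}

/-- cosh of the hyperbolic distance. -/
def C (x y : E d) : ℝ := 1 + 2 * ‖x - y‖ ^ 2 / ((1 - ‖x‖ ^ 2) * (1 - ‖y‖ ^ 2))

lemma dH_eq_arcosh (x y : E d) : dH x y = arcosh (C x y) := rfl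

lemma C_symm (x y : E d) : C x y = C y x := by
  unfold C; rw [norm_sub_rev]; ring

lemma pball_iff {x : E d} : x ∈ pball d ↔ ‖x‖ < 1 := Iff.rfl

lemma denom_pos {x : E d} (hx : x ∈ pball d) : 0 < 1 - ‖x‖ ^ 2 := by
  have h := pball_iff.1 hx
  have := norm_nonneg x
  nlinarith

lemma one_le_C {x y : E d} (hx : x ∈ pball d) (hy : y ∈ pball d) : 1 ≤ C x y := by
  unfold C
  have hx' := denom_pos hx; have hy' := denom_pos hy
  have : 0 ≤ 2 * ‖x - y‖ ^ 2 / ((1 - ‖x‖ ^ 2) * (1 - ‖y‖ ^ 2)) := by positivity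
  linarith

lemma C_self (x : E d) : C x x = 1 := by
  unfold C; simp

lemma one_lt_C {x y : E d} (hx : x ∈ pball d) (hy : y ∈ pball d) (hxy : x ≠ y) :
    1 < C x y := by
  unfold C
  have hx' := denom_pos hx; have hy' := denom_pos hy
  have hn : 0 < ‖x - y‖ ^ 2 := pow_pos (norm_pos_iff.2 (sub_ne_zero.2 hxy)) 2
  have : 0 < 2 * ‖x - y‖ ^ 2 / ((1 - ‖x‖ ^ 2) * (1 - ‖y‖ ^ 2)) :=
    div_pos (by nlinarith) (mul_pos hx' hy')
  linarith

/-- The lift to the hyperboloid. -/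
def Lft (x : E d) : ℝ × E d := ((1 + ‖x‖ ^ 2) / (1 - ‖x‖ ^ 2), (2 / (1 - ‖x‖ ^ 2)) • x)

/-- Projection back to the ball. -/
def Dn (X : ℝ × E d) : E d := (1 + X.1)⁻¹ • X.2

lemma Lft_fst {x : E d} (hx : x ∈ pball d) : 1 ≤ (Lft x).1 := by
  have h := denom_pos hx
  rw [Lft, le_div_iff₀ h]
  nlinarith

lemma Lft_fst_pos {x : E d} (hx : x ∈ pball d) : 0 < (Lft x).1 :=
  lt_of_lt_of_le one_pos (Lft_fst hx)

lemma B_Lft {x y : E d} (hx : x ∈ pball d) (hy : y ∈ pball d) :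
    B (Lft x) (Lft y) = - C x y := by
  have hx' := (denom_pos hx).ne'
  have hy' := (denom_pos hy).ne'
  unfold B Lft C
  simp only [real_inner_smul_left, real_inner_smul_right]
  rw [norm_sub_sq_real]
  field_simp
  ring

lemma B_Lft_self {x : E d} (hx : x ∈ pball d) : B (Lft x) (Lft x) = -1 := by
  rw [B_Lft hx hx, C_self]

lemma Dn_Lft {x : E d} (hx : x ∈ pball d) : Dn (Lft x) = x := by
  have hx' := (denom_pos hx).ne'
  unfold Dn Lft
  rw [smul_smul]
  convert one_smul ℝ x using 2
  field_simp
  ring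

lemma Lft_inj {x y : E d} (hx : x ∈ pball d) (hy : y ∈ pball d)
    (h : Lft x = Lft y) : x = y := by
  rw [← Dn_Lft hx, ← Dn_Lft hy, h]

/-- The upper hyperboloid. -/
def Hyp (X : ℝ × E d) : Prop := B X X = -1 ∧ 0 < X.1

lemma Hyp_Lft {x : E d} (hx : x ∈ pball d) : Hyp (Lft x) :=
  ⟨B_Lft_self hx, Lft_fst_pos hx⟩

lemma Hyp.normsq {X : ℝ × E d} (hX : Hyp X) : ‖X.2‖ ^ 2 = X.1 ^ 2 - 1 := by
  have := B_self X; rw [hX.1] at this; linarith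

lemma Hyp.one_le_fst {X : ℝ × E d} (hX : Hyp X) : 1 ≤ X.1 := by
  have h := hX.normsq
  have h2 := sq_nonneg ‖X.2‖
  nlinarith [hX.2]

lemma Hyp.Dn_mem {X : ℝ × E d} (hX : Hyp X) : Dn X ∈ pball d := by
  have h1 := hX.one_le_fst
  have h0 : 0 < 1 + X.1 := by linarith
  rw [pball_iff, Dn, norm_smul]
  rw [show ‖(1 + X.1)⁻¹‖ = (1 + X.1)⁻¹ by
    rw [Real.norm_eq_abs, abs_of_pos (by positivity)]]
  rw [inv_mul_lt_iff₀ h0, mul_one]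
  have hsq : ‖X.2‖ ^ 2 = X.1 ^ 2 - 1 := hX.normsq
  nlinarith [norm_nonneg X.2]

lemma Hyp.Lft_Dn {X : ℝ × E d} (hX : Hyp X) : Lft (Dn X) = X := by
  have h1 := hX.one_le_fst
  have h0 : 0 < 1 + X.1 := by linarith
  have hsq : ‖X.2‖ ^ 2 = X.1 ^ 2 - 1 := hX.normsq
  have hnorm : ‖Dn X‖ ^ 2 = (X.1 - 1) / (X.1 + 1) := by
    rw [Dn, norm_smul, mul_pow]
    rw [show ‖(1 + X.1)⁻¹‖ = (1 + X.1)⁻¹ by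
      rw [Real.norm_eq_abs, abs_of_pos (by positivity)]]
    rw [hsq]
    field_simp
    ring
  have hden : 1 - ‖Dn X‖ ^ 2 = 2 / (X.1 + 1) := by
    rw [hnorm]; field_simp; ring
  unfold Lft
  refine Prod.ext ?_ ?_
  · show (1 + ‖Dn X‖ ^ 2) / (1 - ‖Dn X‖ ^ 2) = X.1
    rw [hden, hnorm]
    rw [div_eq_iff (by positivity : (2:ℝ) / (X.1 + 1) ≠ 0)]
    field_simp
    ring
  · show (2 / (1 - ‖Dn X‖ ^ 2)) • Dn X = X.2
    rw [hden, Dn, smul_smul,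
      show 2 / (2 / (X.1 + 1)) * (1 + X.1)⁻¹ = 1 by field_simp; ring, one_smul]

lemma eq_of_Lft_smul {z w : E d} {r : ℝ} (hz : z ∈ pball d) (hw : w ∈ pball d)
    (h : Lft z = r • Lft w) : z = w := by
  have h1 : B (Lft z) (Lft z) = -1 := B_Lft_self hz
  have h2 : B (Lft w) (Lft w) = -1 := B_Lft_self hw
  rw [h, B_smul_left, B_smul_right, h2] at h1
  have hr2 : r ^ 2 = 1 := by nlinarith
  have hfst : (Lft z).1 = r * (Lft w).1 := by rw [h]; rfl
  have hrpos : 0 < r := by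
    have := Lft_fst_pos hz; have := Lft_fst_pos hw
    nlinarith
  have hr1 : r = 1 := by nlinarith
  rw [hr1, one_smul] at h
  exact Lft_inj hz hw h

/- ### arcosh lemmas -/

lemma arcosh_nonneg {t : ℝ} (ht : 1 ≤ t) : 0 ≤ arcosh t := by
  unfold arcosh
  apply Real.log_nonneg
  nlinarith [Real.sqrt_nonneg (t ^ 2 - 1)]

lemma cosh_arcosh {t : ℝ} (ht : 1 ≤ t) : Real.cosh (arcosh t) = t := by
  unfold arcosh
  have hs : Real.sqrt (t ^ 2 - 1) ^ 2 = t ^ 2 - 1 := Real.sq_sqrt (by nlinarith)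
  have hpos : 0 < t + Real.sqrt (t ^ 2 - 1) := by nlinarith [Real.sqrt_nonneg (t ^ 2 - 1)]
  rw [Real.cosh_log hpos]
  have hinv : (t + Real.sqrt (t ^ 2 - 1))⁻¹ = t - Real.sqrt (t ^ 2 - 1) :=
    inv_eq_of_mul_eq_one_right (by nlinarith)
  rw [hinv]; ring

lemma arcosh_cosh {s : ℝ} (hs : 0 ≤ s) : arcosh (Real.cosh s) = s := by
  unfold arcosh
  have h1 : Real.cosh s ^ 2 - 1 = Real.sinh s ^ 2 := by
    have := Real.cosh_sq s; linarith
  rw [h1, Real.sqrt_sq (Real.sinh_nonneg_iff.2 hs), Real.cosh_add_sinh, Real.log_exp]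

lemma arcosh_mono {a b : ℝ} (ha : 1 ≤ a) (hab : a ≤ b) : arcosh a ≤ arcosh b := by
  unfold arcosh
  apply Real.log_le_log (by nlinarith [Real.sqrt_nonneg (a ^ 2 - 1)])
  have : Real.sqrt (a ^ 2 - 1) ≤ Real.sqrt (b ^ 2 - 1) :=
    Real.sqrt_le_sqrt (by nlinarith)
  linarith

lemma C_lt_of_dH_lt {b u z : E d} (hb : b ∈ pball d) (hu : u ∈ pball d) (hz : z ∈ pball d)
    (h : dH b u < dH b z) : C b u < C b z := by
  by_contra hle
  push_neg at hle
  have := arcosh_mono (one_le_C hb hz) hle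
  rw [dH_eq_arcosh, dH_eq_arcosh] at h
  linarith

lemma arcosh_inj {a b : ℝ} (ha : 1 ≤ a) (hb : 1 ≤ b) (h : arcosh a = arcosh b) : a = b := by
  rw [← cosh_arcosh ha, ← cosh_arcosh hb, h]

end Horo

namespace Horo
variable {d : ℕ}

/-- The full geodesic line through two points, as a set. -/
def lineThrough (u v : E d) : Set (E d) :=
  {w ∈ pball d | Lft w ∈ Submodule.span ℝ {Lft u, Lft v}}

lemma unit_speed_B {γ : ℝ → E d} (hγ : IsUnitSpeedGeodesic γ) (s t : ℝ) :
    B (Lft (γ s)) (Lft (γ t)) = -Real.cosh (s - t) := by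
  have hC : C (γ s) (γ t) = Real.cosh (s - t) := by
    have h1 := hγ.2 s t
    rw [dH_eq_arcosh] at h1
    have h2 : Real.cosh (arcosh (C (γ s) (γ t))) = Real.cosh |s - t| := by rw [h1]
    rw [cosh_arcosh (one_le_C (hγ.1 s) (hγ.1 t)), Real.cosh_abs] at h2
    exact h2
  rw [B_Lft (hγ.1 s) (hγ.1 t), hC]

lemma span_pair_le {a c : ℝ × E d} {Q : Submodule ℝ (ℝ × E d)} (ha : a ∈ Q) (hc : c ∈ Q) :
    Submodule.span ℝ {a, c} ≤ Q := by
  rw [Submodule.span_le, Set.insert_subset_iff, Set.singleton_subset_iff]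
  exact ⟨ha, hc⟩

lemma unit_speed_pkg {γ : ℝ → E d} (hγ : IsUnitSpeedGeodesic γ) :
    ∃ W : ℝ × E d, B W W = 1 ∧ B (Lft (γ 0)) W = 0 ∧
      ∀ t, Lft (γ t) = Real.cosh t • Lft (γ 0) + Real.sinh t • W := by
  have hs1 : Real.sinh 1 ≠ 0 := ne_of_gt (Real.sinh_pos_iff.2 one_pos)
  set Γ : ℝ → ℝ × E d := fun t => Lft (γ t) with hΓ
  set W : ℝ × E d := (Real.sinh 1)⁻¹ • (Γ 1 - Real.cosh 1 • Γ 0) with hWdef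
  have hB : ∀ s t, B (Γ s) (Γ t) = -Real.cosh (s - t) := unit_speed_B hγ
  have hW : ∀ t, B (Γ t) W = Real.sinh t := by
    intro t
    rw [hWdef]
    simp only [B_smul_right, B_sub_right, B_smul_right, hB]
    rw [Real.cosh_sub]
    field_simp
    ring
  have hW' : ∀ t, B W (Γ t) = Real.sinh t := fun t => (B_symm _ _).trans (hW t)
  have hWW : B W W = 1 := by
    nth_rewrite 1 [hWdef]
    rw [B_smul_left, B_sub_left, B_smul_left, hW 1, hW 0, Real.sinh_zero]
    field_simp
    ring
  refine ⟨W, hWW, by rw [hW 0, Real.sinh_zero], ?_⟩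
  intro t
  have key : ∀ X : ℝ × E d, B X (Γ 0) = 0 → B X X ≤ 0 → X = 0 := fun X h1 h2 =>
    eq_zero_of_null_orth (by rw [hB 0 0]; simp) h1 h2
  have hv0 : Γ t - (Real.cosh t • Γ 0 + Real.sinh t • W) = 0 := by
    apply key
    · simp only [B_sub_left, B_add_left, B_smul_left, hB, hW']
      rw [show t - 0 = t by ring, show (0:ℝ) - 0 = 0 by ring, Real.cosh_zero,
        Real.sinh_zero]
      ring
    · have hexp : B (Γ t - (Real.cosh t • Γ 0 + Real.sinh t • W))
          (Γ t - (Real.cosh t • Γ 0 + Real.sinh t • W)) =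
          -1 + Real.cosh t ^ 2 - Real.sinh t ^ 2 := by
        simp only [B_sub_left, B_sub_right, B_add_left, B_add_right, B_smul_left,
          B_smul_right, hB, hW, hW', hWW]
        rw [show t - t = 0 by ring, show t - 0 = t by ring, show (0:ℝ) - t = -t by ring,
          show (0:ℝ) - 0 = 0 by ring, Real.cosh_neg, Real.cosh_zero, Real.sinh_zero]
        ring
      rw [hexp]
      have h := Real.cosh_sq t
      linarith
  have := sub_eq_zero.1 hv0
  exact this

lemma surj_aux {Γ0 W : ℝ × E d} (h0 : Hyp Γ0) (hWW : B W W = 1) (h0W : B Γ0 W = 0)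
    {w : E d} (hw : w ∈ pball d) (hmem : Lft w ∈ Submodule.span ℝ {Γ0, W}) :
    ∃ t : ℝ, Lft w = Real.cosh t • Γ0 + Real.sinh t • W := by
  obtain ⟨a, b, hab⟩ := Submodule.mem_span_pair.1 hmem
  have h0W' : B W Γ0 = 0 := (B_symm _ _).trans h0W
  have hBw : B (Lft w) (Lft w) = -1 := B_Lft_self hw
  have hexp : B (Lft w) (Lft w) = -a^2 + b^2 := by
    rw [← hab]
    simp only [B_add_left, B_add_right, B_smul_left, B_smul_right, h0.1, hWW, h0W, h0W']
    ring
  have hab2 : a^2 = 1 + b^2 := by rw [hexp] at hBw; linarith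
  have hBneg : B (Lft w) Γ0 < 0 := B_neg_of_timelike (B_Lft_self hw) h0.1 (Lft_fst_pos hw) h0.2
  have hBa : B (Lft w) Γ0 = -a := by
    rw [← hab]
    simp only [B_add_left, B_smul_left, h0.1, h0W']
    ring
  have ha : 0 < a := by rw [hBa] at hBneg; linarith
  refine ⟨Real.arsinh b, ?_⟩
  rw [Real.cosh_arsinh, Real.sinh_arsinh, ← hab2, Real.sqrt_sq ha.le, hab]

lemma span_change {Γ0 W L0 L1 : ℝ × E d} {s₀ s₁ : ℝ} (h : s₀ ≠ s₁)
    (h0 : L0 = Real.cosh s₀ • Γ0 + Real.sinh s₀ • W)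
    (h1 : L1 = Real.cosh s₁ • Γ0 + Real.sinh s₁ • W) :
    Submodule.span ℝ {Γ0, W} = Submodule.span ℝ {L0, L1} := by
  have hs : Real.sinh (s₁ - s₀) ≠ 0 := by
    intro hh
    have : s₁ - s₀ = 0 := Real.sinh_injective (by rw [hh, Real.sinh_zero])
    exact h (by linarith)
  apply le_antisymm
  · apply span_pair_le
    · rw [← Submodule.smul_mem_iff _ hs]
      have hid : Real.sinh (s₁ - s₀) • Γ0 = Real.sinh s₁ • L0 - Real.sinh s₀ • L1 := by
        rw [h0, h1, Real.sinh_sub]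
        module
      rw [hid]
      exact sub_mem (Submodule.smul_mem _ _ (Submodule.subset_span (by simp)))
        (Submodule.smul_mem _ _ (Submodule.subset_span (by simp)))
    · rw [← Submodule.smul_mem_iff _ hs]
      have hid : Real.sinh (s₁ - s₀) • W = Real.cosh s₀ • L1 - Real.cosh s₁ • L0 := by
        rw [h0, h1, Real.sinh_sub]
        module
      rw [hid]
      exact sub_mem (Submodule.smul_mem _ _ (Submodule.subset_span (by simp)))
        (Submodule.smul_mem _ _ (Submodule.subset_span (by simp)))
  · apply span_pair_le
    · exact Submodule.mem_span_pair.2 ⟨_, _, h0.symm⟩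
    · exact Submodule.mem_span_pair.2 ⟨_, _, h1.symm⟩

/-- Any geodesic line through two distinct points is `lineThrough` of them. -/
lemma geodesicLine_eq {c : Set (E d)} (hc : IsGeodesicLine c) {x y : E d}
    (hx : x ∈ c) (hy : y ∈ c) (hxy : x ≠ y) : c = lineThrough x y := by
  obtain ⟨γ, hγ, rfl⟩ := hc
  obtain ⟨W, hWW, h0W, hrep⟩ := unit_speed_pkg hγ
  obtain ⟨s₀, rfl⟩ := hx
  obtain ⟨s₁, rfl⟩ := hy
  have hs : s₀ ≠ s₁ := fun h => hxy (by rw [h])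
  have hspan : Submodule.span ℝ {Lft (γ 0), W} =
      Submodule.span ℝ {Lft (γ s₀), Lft (γ s₁)} :=
    span_change hs (hrep s₀) (hrep s₁)
  ext w
  constructor
  · rintro ⟨t, rfl⟩
    refine ⟨hγ.1 t, ?_⟩
    rw [← hspan]
    exact Submodule.mem_span_pair.2 ⟨_, _, (hrep t).symm⟩
  · rintro ⟨hw, hmem⟩
    rw [← hspan] at hmem
    obtain ⟨t, ht⟩ := surj_aux (Hyp_Lft (hγ.1 0)) hWW h0W hw hmem
    exact ⟨t, Lft_inj (hγ.1 t) hw ((hrep t).trans ht.symm)⟩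

/-- `lineThrough` of two distinct ball points is a geodesic line containing them. -/
lemma lineThrough_spec {u v : E d} (hu : u ∈ pball d) (hv : v ∈ pball d) (huv : u ≠ v) :
    IsGeodesicLine (lineThrough u v) ∧ u ∈ lineThrough u v ∧ v ∈ lineThrough u v := by
  have hmu : u ∈ lineThrough u v := ⟨hu, Submodule.subset_span (by simp)⟩
  have hmv : v ∈ lineThrough u v := ⟨hv, Submodule.subset_span (by simp)⟩
  refine ⟨?_, hmu, hmv⟩
  have hC1 : 1 < C u v := one_lt_C hu hv huv
  set δ : ℝ := dH u v with hδ
  have hcoshδ : Real.cosh δ = C u v := by rw [hδ, dH_eq_arcosh]; exact cosh_arcosh hC1.le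
  have hδpos : 0 < δ := by
    rw [hδ, dH_eq_arcosh]
    unfold arcosh
    apply Real.log_pos
    nlinarith [Real.sqrt_nonneg ((C u v) ^ 2 - 1), hC1]
  have hsinh : 0 < Real.sinh δ := Real.sinh_pos_iff.2 hδpos
  set W : ℝ × E d := (Real.sinh δ)⁻¹ • (Lft v - Real.cosh δ • Lft u) with hW
  have hBuv : B (Lft u) (Lft v) = -Real.cosh δ := by rw [B_Lft hu hv, hcoshδ]
  have hBvu : B (Lft v) (Lft u) = -Real.cosh δ := (B_symm _ _).trans hBuv
  have hBuW : B (Lft u) W = 0 := by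
    rw [hW]
    simp only [B_smul_right, B_sub_right, B_smul_right, hBuv, B_Lft_self hu]
    ring
  have hBWu : B W (Lft u) = 0 := (B_symm _ _).trans hBuW
  have hBWW : B W W = 1 := by
    rw [hW]
    simp only [B_smul_left, B_smul_right, B_sub_left, B_sub_right,
      B_Lft_self hu, B_Lft_self hv, hBuv, hBvu]
    have h2 : Real.sinh δ ^ 2 = Real.cosh δ ^ 2 - 1 := by
      have := Real.cosh_sq δ; linarith
    field_simp
    nlinarith [h2]
  have hHyp : ∀ t : ℝ, Hyp (Real.cosh t • Lft u + Real.sinh t • W) := by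
    intro t
    have hBXX : B (Real.cosh t • Lft u + Real.sinh t • W)
        (Real.cosh t • Lft u + Real.sinh t • W) = -1 := by
      simp only [B_add_left, B_add_right, B_smul_left, B_smul_right,
        B_Lft_self hu, hBWW, hBuW, hBWu]
      have h := Real.cosh_sq t
      ring_nf
      nlinarith [h]
    refine ⟨hBXX, ?_⟩
    refine fst_pos_of_B_neg hBXX (by rw [B_Lft_self hu]; norm_num) (Lft_fst_pos hu) ?_
    rw [B_add_left, B_smul_left, B_smul_left, B_Lft_self hu, hBWu]
    have := Real.cosh_pos (x := t)
    nlinarith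
  set γ : ℝ → E d := fun t => Dn (Real.cosh t • Lft u + Real.sinh t • W) with hγdef
  have hLγ : ∀ t, Lft (γ t) = Real.cosh t • Lft u + Real.sinh t • W :=
    fun t => (hHyp t).Lft_Dn
  have hγball : ∀ t, γ t ∈ pball d := fun t => (hHyp t).Dn_mem
  have hunit : IsUnitSpeedGeodesic γ := by
    refine ⟨hγball, fun s t => ?_⟩
    have hCst : C (γ s) (γ t) = Real.cosh (s - t) := by
      have hB : B (Lft (γ s)) (Lft (γ t)) = -(C (γ s) (γ t)) := B_Lft (hγball s) (hγball t)
      rw [hLγ s, hLγ t] at hB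
      simp only [B_add_left, B_add_right, B_smul_left, B_smul_right,
        B_Lft_self hu, hBWW, hBuW, hBWu] at hB
      rw [Real.cosh_sub]
      nlinarith [hB]
    rw [dH_eq_arcosh, hCst, ← Real.cosh_abs, arcosh_cosh (abs_nonneg _)]
  have hγ0 : γ 0 = u := by
    apply Lft_inj (hγball 0) hu
    rw [hLγ 0]
    simp
  have hγδ : γ δ = v := by
    apply Lft_inj (hγball δ) hv
    rw [hLγ δ, hW, smul_smul, mul_inv_cancel₀ hsinh.ne', one_smul]
    module
  have hrange : Set.range γ = lineThrough u v := by
    have h1 : u ∈ Set.range γ := ⟨0, hγ0⟩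
    have h2 : v ∈ Set.range γ := ⟨δ, hγδ⟩
    exact geodesicLine_eq ⟨γ, hunit, rfl⟩ h1 h2 huv
  exact ⟨γ, hunit, hrange.symm⟩

end Horo

namespace Horo
variable {d : ℕ}

/-- The set of ball points whose lift lies in a given subspace. -/
def hullSet (Q : Submodule ℝ (ℝ × E d)) : Set (E d) := {z ∈ pball d | Lft z ∈ Q}

lemma hullSet_subset (Q : Submodule ℝ (ℝ × E d)) : hullSet Q ⊆ pball d :=
  fun _ hz => hz.1

lemma totGeodesic_hullSet (Q : Submodule ℝ (ℝ × E d)) : TotGeodesic (hullSet Q) := by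
  refine ⟨hullSet_subset Q, ?_⟩
  intro x hx y hy hxy c hc hxc hyc
  rw [geodesicLine_eq hc hxc hyc hxy]
  rintro w ⟨hw, hmem⟩
  exact ⟨hw, span_pair_le hx.2 hy.2 hmem⟩

lemma posCombo {M : Set (E d)} (hM : TotGeodesic M) :
    ∀ n (u : Fin (n+1) → E d), (∀ i, u i ∈ M) → ∀ a : Fin (n+1) → ℝ, (∀ i, 0 < a i) →
    ∃ w ∈ M, ∃ r : ℝ, 0 < r ∧ Lft w = r • ∑ i, a i • Lft (u i) := by
  intro n
  induction n with
  | zero =>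
    intro u hu a ha
    refine ⟨u 0, hu 0, (a 0)⁻¹, inv_pos.2 (ha 0), ?_⟩
    rw [Fin.sum_univ_one, smul_smul, inv_mul_cancel₀ (ha 0).ne', one_smul]
  | succ m ih =>
    intro u hu a ha
    obtain ⟨w', hw', r', hr', hLw'⟩ := ih (fun i => u i.succ) (fun i => hu _)
      (fun i => a i.succ) (fun i => ha _)
    have hu0 : u 0 ∈ pball d := hM.1 (hu 0)
    have hw'b : w' ∈ pball d := hM.1 hw'
    set R : ℝ × E d := ∑ i : Fin (m+1), a i.succ • Lft (u i.succ) with hRdef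
    have hR : R = r'⁻¹ • Lft w' := by
      rw [hLw', smul_smul, inv_mul_cancel₀ hr'.ne', one_smul]
    set X : ℝ × E d := ∑ i : Fin (m+2), a i • Lft (u i) with hXdef
    have hXsplit : X = a 0 • Lft (u 0) + R := by
      rw [hXdef, hRdef, Fin.sum_univ_succ]
    have hXalt : X = a 0 • Lft (u 0) + r'⁻¹ • Lft w' := by rw [hXsplit, hR]
    have hBuw : B (Lft (u 0)) (Lft w') < 0 :=
      B_neg_of_timelike (B_Lft_self hu0) (B_Lft_self hw'b) (Lft_fst_pos hu0) (Lft_fst_pos hw'b)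
    have hBXX : B X X < 0 := by
      rw [hXalt]
      simp only [B_add_left, B_add_right, B_smul_left, B_smul_right,
        B_Lft_self hu0, B_Lft_self hw'b, B_symm (Lft w') (Lft (u 0))]
      have h0 := ha 0
      have hri := inv_pos.2 hr'
      nlinarith [hBuw, mul_pos h0 hri]
    have hX1 : 0 < X.1 := by
      rw [hXalt]
      have : (a 0 • Lft (u 0) + r'⁻¹ • Lft w').1
          = a 0 * (Lft (u 0)).1 + r'⁻¹ * (Lft w').1 := rfl
      rw [this]
      have := Lft_fst_pos hu0
      have := Lft_fst_pos hw'b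
      have := ha 0
      have := inv_pos.2 hr'
      positivity
    set s : ℝ := Real.sqrt (-B X X) with hsdef
    have hspos : 0 < s := Real.sqrt_pos.2 (by linarith)
    have hs2 : s ^ 2 = -B X X := Real.sq_sqrt (by linarith)
    have hHypZ : Hyp (s⁻¹ • X) := by
      constructor
      · rw [B_smul_left, B_smul_right]
        rw [show B X X = -(s^2) by linarith]
        field_simp
      · show 0 < s⁻¹ * X.1
        positivity
    refine ⟨Dn (s⁻¹ • X), ?_, s⁻¹, inv_pos.2 hspos, by rw [hHypZ.Lft_Dn]⟩
    by_cases hne : u 0 = w'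
    · have hXu : X = (a 0 + r'⁻¹) • Lft (u 0) := by
        rw [hXalt, ← hne, add_smul]
      have : Lft (Dn (s⁻¹ • X)) = (s⁻¹ * (a 0 + r'⁻¹)) • Lft (u 0) := by
        rw [hHypZ.Lft_Dn, hXu, smul_smul]
      rw [eq_of_Lft_smul hHypZ.Dn_mem hu0 this]
      rw [hne]
      exact hw'
    · obtain ⟨hline, hm1, hm2⟩ := lineThrough_spec hu0 hw'b hne
      have hsub : lineThrough (u 0) w' ⊆ M :=
        hM.2 (u 0) (hu 0) w' hw' hne _ hline hm1 hm2
      apply hsub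
      refine ⟨hHypZ.Dn_mem, ?_⟩
      rw [hHypZ.Lft_Dn]
      apply Submodule.mem_span_pair.2
      refine ⟨s⁻¹ * a 0, s⁻¹ * r'⁻¹, ?_⟩
      rw [hXalt, smul_add, smul_smul, smul_smul]

/-- Master lemma: a ball point whose lift is in the span of the lifts of a totally
geodesic set belongs to the set. -/
lemma mem_of_Lft_mem_span {M : Set (E d)} (hM : TotGeodesic M) {z : E d}
    (hz : z ∈ pball d) (hmem : Lft z ∈ Submodule.span ℝ (Lft '' M)) : z ∈ M := by
  obtain ⟨n, f, g, hsum⟩ := Submodule.mem_span_set'.1 hmem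
  have hgm : ∀ i, ∃ x, x ∈ M ∧ Lft x = (g i : ℝ × E d) := by
    intro i
    obtain ⟨x, hx1, hx2⟩ := (g i).2
    exact ⟨x, hx1, hx2⟩
  choose u hum hLu using hgm
  have hsum' : ∑ i, f i • Lft (u i) = Lft z := by
    rw [← hsum]
    exact Finset.sum_congr rfl fun i _ => by rw [hLu i]
  rcases n with _ | m
  · exfalso
    rw [Fin.sum_univ_zero] at hsum'
    have := Lft_fst_pos hz
    rw [← hsum'] at this
    simp at this
  · have hub : ∀ i, u i ∈ pball d := fun i => hM.1 (hum i)
    obtain ⟨w, hwM, r, hr, hLw⟩ := posCombo hM m u hum (fun _ => 1) (fun _ => one_pos)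
    set msum : ℝ × E d := ∑ i : Fin (m+1), (1:ℝ) • Lft (u i) with hmsum
    set ε : ℝ := (1 + ∑ i, |f i|)⁻¹ with hε
    have hsum_abs : 0 ≤ ∑ i, |f i| := Finset.sum_nonneg fun i _ => abs_nonneg _
    have hεpos : 0 < ε := by rw [hε]; positivity
    have hεf : ∀ i, ε * f i < 1 := by
      intro i
      have h1 : |f i| ≤ ∑ j, |f j| :=
        Finset.single_le_sum (f := fun j => |f j|) (fun j _ => abs_nonneg _) (Finset.mem_univ i)
      have h2 : f i ≤ ∑ j, |f j| := le_trans (le_abs_self _) h1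
      rw [hε, inv_mul_lt_iff₀ (by positivity), mul_one]
      linarith
    obtain ⟨w₂, hw₂M, r₂, hr₂, hLw₂⟩ := posCombo hM m u hum (fun i => 1 - ε * f i)
      (fun i => by show 0 < 1 - ε * f i; linarith [hεf i])
    have hm₂ : ∑ i : Fin (m+1), (1 - ε * f i) • Lft (u i) = msum - ε • Lft z := by
      rw [hmsum, ← hsum', Finset.smul_sum, ← Finset.sum_sub_distrib]
      refine Finset.sum_congr rfl fun i _ => ?_
      rw [smul_smul]
      module
    beta_reduce at hLw₂
    rw [hm₂] at hLw₂
    -- Lft z = ε⁻¹ • (msum - (msum - ε • Lft z)) ; msum = r⁻¹ • Lft w ; rhs = r₂⁻¹ • Lft w₂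
    have hmsum_w : msum = r⁻¹ • Lft w := by
      rw [hLw, smul_smul, inv_mul_cancel₀ hr.ne', one_smul]
    have hdiff : msum - r₂⁻¹ • Lft w₂ = ε • Lft z := by
      rw [hLw₂, smul_smul, inv_mul_cancel₀ hr₂.ne', one_smul]
      abel
    have hLz : Lft z = (ε⁻¹ * r⁻¹) • Lft w + (-(ε⁻¹ * r₂⁻¹)) • Lft w₂ := by
      have : Lft z = ε⁻¹ • (msum - r₂⁻¹ • Lft w₂) := by
        rw [hdiff, smul_smul, inv_mul_cancel₀ hεpos.ne', one_smul]
      rw [this, hmsum_w]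
      module
    by_cases hne : w = w₂
    · have : Lft z = (ε⁻¹ * r⁻¹ - ε⁻¹ * r₂⁻¹) • Lft w := by
        rw [hLz, ← hne]
        module
      rw [eq_of_Lft_smul hz (hM.1 hwM) this]
      exact hwM
    · obtain ⟨hline, hm1, hm2⟩ := lineThrough_spec (hM.1 hwM) (hM.1 hw₂M) hne
      have hsub : lineThrough w w₂ ⊆ M := hM.2 w hwM w₂ hw₂M hne _ hline hm1 hm2
      exact hsub ⟨hz, Submodule.mem_span_pair.2 ⟨_, _, hLz.symm⟩⟩

end Horo

namespace Horo
variable {d : ℕ}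

open Filter Topology

lemma Lft_smul_eq {w : E d} (hw : w ∈ pball d) :
    ((1 - ‖w‖^2)/2) • Lft w = (((1 + ‖w‖^2)/2 : ℝ), w) := by
  have h := (denom_pos hw).ne'
  unfold Lft
  refine Prod.ext ?_ ?_
  · show (1 - ‖w‖^2)/2 * ((1 + ‖w‖ ^ 2) / (1 - ‖w‖ ^ 2)) = (1 + ‖w‖^2)/2
    field_simp
  · show ((1 - ‖w‖^2)/2) • ((2 / (1 - ‖w‖ ^ 2)) • w) = w
    rw [smul_smul, show (1 - ‖w‖^2)/2 * (2 / (1 - ‖w‖ ^ 2)) = 1 by field_simp, one_smul]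

lemma xi_mem_span {M : Set (E d)} (hMb : M ⊆ pball d) {q : E d} (hq1 : ‖q‖ = 1)
    (hq : q ∈ closure M) : ((1:ℝ), q) ∈ Submodule.span ℝ (Lft '' M) := by
  obtain ⟨x, hx, hxq⟩ := mem_closure_iff_seq_limit.1 hq
  have hcl : IsClosed (Submodule.span ℝ (Lft '' M) : Set (ℝ × E d)) :=
    Submodule.closed_of_finiteDimensional _
  have hg : Continuous (fun w : E d => ((((1 : ℝ) + ‖w‖^2)/2 : ℝ), w)) := by
    apply Continuous.prodMk
    · exact (continuous_const.add ((continuous_norm).pow 2)).div_const 2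
    · exact continuous_id
  have hmem : ∀ n, ((((1:ℝ) + ‖x n‖^2)/2 : ℝ), x n) ∈
      (Submodule.span ℝ (Lft '' M) : Set (ℝ × E d)) := by
    intro n
    rw [← Lft_smul_eq (hMb (hx n))]
    exact Submodule.smul_mem _ _ (Submodule.subset_span ⟨x n, hx n, rfl⟩)
  have htend : Tendsto (fun n => ((((1:ℝ) + ‖x n‖^2)/2 : ℝ), x n)) atTop
      (𝓝 ((((1:ℝ) + ‖q‖^2)/2 : ℝ), q)) := (hg.tendsto q).comp hxq
  have hfin := hcl.mem_of_tendsto htend (Filter.Eventually.of_forall hmem)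
  rw [hq1] at hfin
  norm_num at hfin
  exact hfin

lemma B_Lft_xi {q x : E d} (hq : ‖q‖ = 1) (hx : x ∈ pball d) :
    B (Lft x) ((1:ℝ), q) = -(‖q - x‖^2/(1 - ‖x‖^2)) := by
  have h := (denom_pos hx).ne'
  unfold B Lft
  show (inner ℝ ((2 / (1 - ‖x‖ ^ 2)) • x) q : ℝ) - (1 + ‖x‖ ^ 2) / (1 - ‖x‖ ^ 2) * 1 = _
  rw [real_inner_smul_left, norm_sub_sq_real, hq, real_inner_comm]
  field_simp
  ring

lemma ex_pos {q x : E d} (hq : ‖q‖ = 1) (hx : x ∈ pball d) :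
    0 < ‖q - x‖^2/(1 - ‖x‖^2) := by
  have h := denom_pos hx
  have hqx : q ≠ x := by
    intro hh
    rw [hh] at hq
    rw [pball_iff, hq] at hx
    exact lt_irrefl 1 hx
  have : 0 < ‖q - x‖ := norm_pos_iff.2 (sub_ne_zero.2 hqx)
  positivity

lemma boundary_mem_closure_hullSet {Q : Submodule ℝ (ℝ × E d)} {q b : E d}
    (hq1 : ‖q‖ = 1) (hb : b ∈ pball d) (hbQ : Lft b ∈ Q) (hqQ : ((1:ℝ), q) ∈ Q) :
    q ∈ closure (hullSet Q) := by
  set e : ℝ := ‖q - b‖^2/(1 - ‖b‖^2) with hedef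
  have he : 0 < e := ex_pos hq1 hb
  have hBbq : B (Lft b) ((1:ℝ), q) = -e := B_Lft_xi hq1 hb
  have hBqq : B ((1:ℝ), q) ((1:ℝ), q) = 0 := by
    show (inner ℝ q q : ℝ) - 1 * 1 = 0
    rw [real_inner_self_eq_norm_sq, hq1]
    norm_num
  set b1 : ℝ := (Lft b).1 with hb1def
  set bv : E d := (Lft b).2 with hbvdef
  have hb1 : 1 ≤ b1 := Lft_fst hb
  set t : ℕ → ℝ := fun n => (n:ℝ) + 1 with htdef
  have htpos : ∀ n, 0 < t n := fun n => by positivity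
  set sn : ℕ → ℝ := fun n => Real.sqrt (1 + 2*(t n)*e) with hsndef
  have hsq : ∀ n, (0:ℝ) < 1 + 2*(t n)*e := fun n => by
    have := htpos n; positivity
  have hsnpos : ∀ n, 0 < sn n := fun n => Real.sqrt_pos.2 (hsq n)
  have hsn2 : ∀ n, (sn n)^2 = 1 + 2*(t n)*e := fun n => Real.sq_sqrt (hsq n).le
  set Y : ℕ → ℝ × E d := fun n => Lft b + (t n) • ((1:ℝ), q) with hYdef
  have hBYY : ∀ n, B (Y n) (Y n) = -(1 + 2*(t n)*e) := by
    intro n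
    rw [hYdef]
    simp only [B_add_left, B_add_right, B_smul_left, B_smul_right, B_Lft_self hb,
      hBbq, hBqq, B_symm ((1:ℝ), q) (Lft b)]
    ring
  have hHyp : ∀ n, Hyp ((sn n)⁻¹ • Y n) := by
    intro n
    constructor
    · rw [B_smul_left, B_smul_right, hBYY n, ← hsn2 n]
      have := (hsnpos n).ne'
      field_simp
    · show 0 < (sn n)⁻¹ * (Y n).1
      have hY1 : (Y n).1 = b1 + t n := by
        show (Lft b).1 + t n * 1 = b1 + t n
        rw [← hb1def]; ring
      rw [hY1]
      have := htpos n
      have := hsnpos n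
      positivity
  set z : ℕ → E d := fun n => Dn ((sn n)⁻¹ • Y n) with hzdef
  have hzmem : ∀ n, z n ∈ hullSet Q := by
    intro n
    refine ⟨(hHyp n).Dn_mem, ?_⟩
    rw [(hHyp n).Lft_Dn]
    exact Submodule.smul_mem _ _ (Submodule.add_mem _ hbQ (Submodule.smul_mem _ _ hqQ))
  have hz_eq : ∀ n, z n = ((sn n + b1 + t n)⁻¹) • bv + ((sn n + b1 + t n)⁻¹ * t n) • q := by
    intro n
    show (1 + ((sn n)⁻¹ • Y n).1)⁻¹ • ((sn n)⁻¹ • Y n).2 = _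
    have hY1 : ((sn n)⁻¹ • Y n).1 = (sn n)⁻¹ * (b1 + t n) := by
      show (sn n)⁻¹ * ((Lft b).1 + t n * 1) = _
      rw [← hb1def]; ring
    have hY2 : ((sn n)⁻¹ • Y n).2 = (sn n)⁻¹ • (bv + (t n) • q) := by
      show (sn n)⁻¹ • ((Lft b).2 + (t n) • q) = _
      rw [← hbvdef]
    rw [hY1, hY2, smul_smul]
    have hc : (1 + (sn n)⁻¹ * (b1 + t n))⁻¹ * (sn n)⁻¹ = (sn n + b1 + t n)⁻¹ := by
      rw [← mul_inv]
      congr 1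
      field_simp [(hsnpos n).ne']
      ring
    rw [hc, smul_add, smul_smul]
  have ht_atTop : Tendsto t atTop atTop := by
    rw [htdef]
    exact tendsto_atTop_add_const_right _ 1 tendsto_natCast_atTop_atTop
  have hden_atTop : Tendsto (fun n => sn n + b1 + t n) atTop atTop := by
    apply tendsto_atTop_mono (fun n => ?_) ht_atTop
    have := (hsnpos n).le
    linarith
  have hc0 : Tendsto (fun n => (sn n + b1 + t n)⁻¹) atTop (𝓝 0) :=
    hden_atTop.inv_tendsto_atTop
  have h1t : Tendsto (fun n => (t n)⁻¹) atTop (𝓝 0) := ht_atTop.inv_tendsto_atTop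
  have hsnt : Tendsto (fun n => sn n * (t n)⁻¹) atTop (𝓝 0) := by
    have heq : ∀ n, sn n * (t n)⁻¹ = Real.sqrt ((t n)⁻¹*(t n)⁻¹ + 2*e*(t n)⁻¹) := by
      intro n
      rw [hsndef]
      rw [show (t n)⁻¹*(t n)⁻¹ + 2*e*(t n)⁻¹ = (1 + 2*(t n)*e) * ((t n)⁻¹)^2 by
        field_simp [(htpos n).ne']]
      rw [Real.sqrt_mul (hsq n).le, Real.sqrt_sq (by positivity)]
    rw [show (0:ℝ) = Real.sqrt (0*0 + 2*e*0) by simp]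
    apply Tendsto.congr (fun n => (heq n).symm)
    apply (Real.continuous_sqrt.tendsto _).comp
    exact ((h1t.mul h1t).add ((tendsto_const_nhds (x := 2*e)).mul h1t))
  have hb1t : Tendsto (fun n => b1 * (t n)⁻¹) atTop (𝓝 0) := by
    rw [show (0:ℝ) = b1 * 0 by ring]
    exact (tendsto_const_nhds (x := b1)).mul h1t
  have hct : Tendsto (fun n => (sn n + b1 + t n)⁻¹ * t n) atTop (𝓝 1) := by
    have heq : ∀ n, (sn n + b1 + t n)⁻¹ * t n
        = (sn n * (t n)⁻¹ + b1 * (t n)⁻¹ + 1)⁻¹ := by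
      intro n
      have h1 : sn n * (t n)⁻¹ + b1 * (t n)⁻¹ + 1 = (sn n + b1 + t n) * (t n)⁻¹ := by
        rw [add_mul, add_mul, mul_inv_cancel₀ (htpos n).ne']
      rw [h1, mul_inv, inv_inv]
    have hlim : Tendsto (fun n => (sn n * (t n)⁻¹ + b1 * (t n)⁻¹ + 1)⁻¹) atTop
        (𝓝 (((0:ℝ)+0+1))⁻¹) :=
      Tendsto.inv₀ ((hsnt.add hb1t).add tendsto_const_nhds) (by norm_num)
    rw [show (((0:ℝ)+0+1))⁻¹ = 1 by norm_num] at hlim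
    exact Tendsto.congr (fun n => (heq n).symm) hlim
  have hz_tend : Tendsto z atTop (𝓝 ((0:ℝ) • bv + (1:ℝ) • q)) := by
    apply Tendsto.congr (fun n => (hz_eq n).symm)
    exact (hc0.smul_const bv).add (hct.smul_const q)
  rw [zero_smul, one_smul, zero_add] at hz_tend
  exact mem_closure_of_tendsto hz_tend (Filter.Eventually.of_forall hzmem)

end Horo

namespace Horo
variable {d K : ℕ}

def xi (p : Fin K → E d) (i : Fin K) : ℝ × E d := ((1:ℝ), p i)

def Wsub (b : E d) (p : Fin K → E d) : Submodule ℝ (ℝ × E d) :=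
  Submodule.span ℝ (insert (Lft b) (Set.range (xi p)))

def Vsub (p : Fin K → E d) : Submodule ℝ (ℝ × E d) :=
  Submodule.span ℝ (Set.range (xi p))

lemma Vsub_le_Wsub (b : E d) (p : Fin K → E d) : Vsub p ≤ Wsub b p :=
  Submodule.span_mono (Set.subset_insert _ _)

lemma xi_mem_Vsub (p : Fin K → E d) (i : Fin K) : xi p i ∈ Vsub p :=
  Submodule.subset_span ⟨i, rfl⟩

lemma GH_insert_eq (p : Fin K → E d) (hp : ∀ i, ‖p i‖ = 1) {b : E d} (hb : b ∈ pball d) :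
    GH (insert b (Set.range p)) = hullSet (Wsub b p) := by
  apply subset_antisymm
  · apply Set.sInter_subset_of_mem
    refine ⟨totGeodesic_hullSet _, ?_, ?_⟩
    · rintro x ⟨hx1, hx2⟩
      rcases hx1 with rfl | ⟨i, rfl⟩
      · exact ⟨hb, Submodule.subset_span (Set.mem_insert _ _)⟩
      · exact absurd (pball_iff.1 hx2) (by rw [hp i]; exact lt_irrefl 1)
    · rintro x (rfl | ⟨i, rfl⟩)
      · exact subset_closure ⟨hb, Submodule.subset_span (Set.mem_insert _ _)⟩
      · exact boundary_mem_closure_hullSet (hp i) hb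
          (Submodule.subset_span (Set.mem_insert _ _))
          (Submodule.subset_span (Set.mem_insert_of_mem _ ⟨i, rfl⟩))
  · intro z hz
    refine Set.mem_sInter.2 fun M hM => ?_
    obtain ⟨hMg, hM1, hM2⟩ := hM
    apply mem_of_Lft_mem_span hMg hz.1
    have hle : Wsub b p ≤ Submodule.span ℝ (Lft '' M) := by
      apply Submodule.span_le.2
      rw [Set.insert_subset_iff]
      constructor
      · exact Submodule.subset_span ⟨b, hM1 ⟨Set.mem_insert _ _, hb⟩, rfl⟩
      · rintro _ ⟨i, rfl⟩
        exact xi_mem_span hMg.1 (hp i) (hM2 (Set.mem_insert_of_mem _ ⟨i, rfl⟩))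
    exact hle hz.2

lemma spine_lower (p : Fin K → E d) (hp : ∀ i, ‖p i‖ = 1) {z : E d}
    (hz : z ∈ pball d) (hmem : Lft z ∈ Vsub p) : z ∈ GH (Set.range p) := by
  refine Set.mem_sInter.2 fun M hM => ?_
  obtain ⟨hMg, _, hM2⟩ := hM
  apply mem_of_Lft_mem_span hMg hz
  have hle : Vsub p ≤ Submodule.span ℝ (Lft '' M) := by
    apply Submodule.span_le.2
    rintro _ ⟨i, rfl⟩
    exact xi_mem_span hMg.1 (hp i) (hM2 ⟨i, rfl⟩)
  exact hle hmem

lemma B_eq_on_span {p : Fin K → E d} {X Y : ℝ × E d}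
    (h : ∀ i, B X (xi p i) = B Y (xi p i)) :
    ∀ v ∈ Vsub p, B X v = B Y v := by
  intro v hv
  induction hv using Submodule.span_induction with
  | mem v hv => obtain ⟨i, rfl⟩ := hv; exact h i
  | zero => rw [B_zero_right, B_zero_right]
  | add v w _ _ hv hw => rw [B_add_right, B_add_right, hv, hw]
  | smul c v _ hv => rw [B_smul_right, B_smul_right, hv]

lemma Vsub_nondeg {p : Fin K → E d} (hp : ∀ i, ‖p i‖ = 1) {i₀ j₀ : Fin K}
    (hne : p i₀ ≠ p j₀) :
    ∀ R ∈ Vsub p, (∀ i, B R (xi p i) = 0) → R = 0 := by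
  intro R hR hRxi
  have hRV : ∀ v ∈ Vsub p, B R v = 0 := by
    have := B_eq_on_span (X := R) (Y := (0 : ℝ × E d)) (p := p)
      (fun i => by rw [hRxi i, B_zero_left])
    intro v hv
    rw [this v hv, B_zero_left]
  have hRR : B R R = 0 := hRV R hR
  have hcomp : ‖R.2‖^2 = R.1^2 := by
    have := B_self R; rw [hRR] at this; linarith
  by_cases hR1 : R.1 = 0
  · have h0 : ‖R.2‖^2 = 0 := by rw [hR1] at hcomp; simpa using hcomp
    have h2 : ‖R.2‖ = 0 := (pow_eq_zero_iff (by norm_num : (2:ℕ) ≠ 0)).1 h0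
    exact Prod.ext hR1 (norm_eq_zero.1 h2)
  · exfalso
    have hinner : ∀ i, (inner ℝ R.2 (p i) : ℝ) = R.1 := by
      intro i
      have h := hRxi i
      simp only [B, xi] at h
      linarith
    have hei : ∀ i : Fin K, R.2 = R.1 • p i := by
      intro i
      have hzero : ‖R.2 - R.1 • p i‖^2 = 0 := by
        rw [norm_sub_sq_real, real_inner_smul_right, hinner i, norm_smul, mul_pow]
        rw [hp i]
        simp only [Real.norm_eq_abs, sq_abs]
        rw [hcomp]
        ring
      have := (pow_eq_zero_iff (n := 2) (by norm_num)).1 hzero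
      rw [norm_eq_zero, sub_eq_zero] at this
      exact this
    have : R.1 • p i₀ = R.1 • p j₀ := by rw [← hei i₀, ← hei j₀]
    exact hne (smul_right_injective _ hR1 this)

lemma exists_proj {Q : Submodule ℝ (ℝ × E d)}
    (hQ : ∀ R ∈ Q, (∀ v ∈ Q, B R v = 0) → R = 0) (X : ℝ × E d) :
    ∃ N, N ∈ Q ∧ ∀ v ∈ Q, B N v = B X v := by
  classical
  let mkdual : (ℝ × E d) → Module.Dual ℝ Q := fun Z =>
    { toFun := fun v => B Z (v : ℝ × E d)
      map_add' := fun v w => by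
        show B Z ((v : ℝ × E d) + (w : ℝ × E d)) = _
        rw [B_add_right]
      map_smul' := fun c v => by
        show B Z (c • (v : ℝ × E d)) = _
        rw [B_smul_right]; rfl }
  let Φ : Q →ₗ[ℝ] Module.Dual ℝ Q :=
    { toFun := fun r => mkdual (r : ℝ × E d)
      map_add' := fun r s => by
        ext v
        show B ((r : ℝ × E d) + (s : ℝ × E d)) (v : ℝ × E d) = _
        rw [B_add_left]; rfl
      map_smul' := fun c r => by
        ext v
        show B (c • (r : ℝ × E d)) (v : ℝ × E d) = _
        rw [B_smul_left]; rfl }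
  have hinj : Function.Injective Φ := by
    rw [injective_iff_map_eq_zero]
    intro r hr
    have : (r : ℝ × E d) = 0 := by
      apply hQ _ r.2
      intro v hv
      exact LinearMap.congr_fun hr ⟨v, hv⟩
    exact Subtype.ext this
  have hsurj : Function.Surjective Φ :=
    (LinearMap.injective_iff_surjective_of_finrank_eq_finrank
      (Subspace.dual_finrank_eq).symm).1 hinj
  obtain ⟨r, hr⟩ := hsurj (mkdual X)
  refine ⟨(r : ℝ × E d), r.2, fun v hv => ?_⟩
  exact LinearMap.congr_fun hr ⟨v, hv⟩

lemma mem_horoInter_B {p : Fin K → E d} (hp : ∀ i, ‖p i‖ = 1) {x y : E d}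
    (hx : x ∈ pball d) (hy : y ∈ horoInter p x) :
    ∀ i, B (Lft y) (xi p i) = B (Lft x) (xi p i) := by
  intro i
  have h := Set.mem_iInter.1 hy i
  obtain ⟨hyb, heq⟩ := h
  unfold busemann at heq
  have h1 : (0:ℝ) < ‖p i - y‖ ^ 2 / (1 - ‖y‖ ^ 2) := ex_pos (hp i) hyb
  have h2 : (0:ℝ) < ‖p i - x‖ ^ 2 / (1 - ‖x‖ ^ 2) := ex_pos (hp i) hx
  have h3 : ‖p i - y‖ ^ 2 / (1 - ‖y‖ ^ 2) = ‖p i - x‖ ^ 2 / (1 - ‖x‖ ^ 2) := by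
    rw [← Real.exp_log h1, ← Real.exp_log h2, heq]
  unfold xi
  rw [B_Lft_xi (hp i) hyb, B_Lft_xi (hp i) hx, h3]

lemma mem_horoInter_of_B {p : Fin K → E d} (hp : ∀ i, ‖p i‖ = 1) {x z : E d}
    (hx : x ∈ pball d) (hz : z ∈ pball d)
    (h : ∀ i, B (Lft z) (xi p i) = B (Lft x) (xi p i)) : z ∈ horoInter p x := by
  refine Set.mem_iInter.2 fun i => ⟨hz, ?_⟩
  unfold busemann
  congr 1
  have h' := h i
  unfold xi at h'
  have h1 : ‖p i - z‖ ^ 2 / (1 - ‖z‖ ^ 2) = -B (Lft z) ((1:ℝ), p i) := by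
    rw [B_Lft_xi (hp i) hz]; ring
  have h2 : ‖p i - x‖ ^ 2 / (1 - ‖x‖ ^ 2) = -B (Lft x) ((1:ℝ), p i) := by
    rw [B_Lft_xi (hp i) hx]; ring
  rw [h1, h2, h']

lemma mem_pball_of_horoInter {p : Fin K → E d} (hK : 0 < K) {x y : E d}
    (hy : y ∈ horoInter p x) : y ∈ pball d :=
  (Set.mem_iInter.1 hy ⟨0, hK⟩).1

end Horo

namespace Horo
variable {d K : ℕ}

set_option maxHeartbeats 1000000 in
lemma case2_decomp {p : Fin K → E d} (hp : ∀ i, ‖p i‖ = 1) {i₀ j₀ : Fin K}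
    (hpne : p i₀ ≠ p j₀) {c : E d} (hc : c ∈ pball d)
    (Nf : (ℝ × E d) → (ℝ × E d)) (hNfV : ∀ X, Nf X ∈ Vsub p)
    (hNf : ∀ X, ∀ v ∈ Vsub p, B (Nf X) v = B X v)
    {x w : E d} (hx : x ∈ pball d) (hwb : w ∈ pball d) (hwW : Lft w ∈ Wsub c p)
    (hwB : ∀ i, B (Lft w) (xi p i) = B (Lft x) (xi p i))
    (hmin : ∀ z ∈ hullSet (Wsub c p) ∩ horoInter p x, z ≠ w → dH c w < dH c z)
    (hcV : Lft c ∉ Vsub p) :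
    ∃ s : ℝ, 0 ≤ s ∧ Lft w = Nf (Lft x) + s • (Lft c - Nf (Lft c)) := by
  have hnd := Vsub_nondeg hp hpne
  set nb : ℝ × E d := Lft c - Nf (Lft c) with hnbdef
  have hnb_orth : ∀ v ∈ Vsub p, B nb v = 0 := by
    intro v hv
    rw [hnbdef, B_sub_left, hNf (Lft c) v hv]
    ring
  have hnb0 : nb ≠ 0 := by
    intro h
    apply hcV
    have : Lft c = Nf (Lft c) := by
      have := sub_eq_zero.1 h
      exact this
    rw [this]
    exact hNfV _
  set τ : ℝ × E d := xi p i₀ + xi p j₀ with hτdef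
  have hτV : τ ∈ Vsub p := Submodule.add_mem _ (xi_mem_Vsub p i₀) (xi_mem_Vsub p j₀)
  have hBξii : B (xi p i₀) (xi p i₀) = 0 := by
    show (inner ℝ (p i₀) (p i₀) : ℝ) - 1 * 1 = 0
    rw [real_inner_self_eq_norm_sq, hp i₀]; norm_num
  have hBξjj : B (xi p j₀) (xi p j₀) = 0 := by
    show (inner ℝ (p j₀) (p j₀) : ℝ) - 1 * 1 = 0
    rw [real_inner_self_eq_norm_sq, hp j₀]; norm_num
  have hBξij : B (xi p i₀) (xi p j₀) = (inner ℝ (p i₀) (p j₀) : ℝ) - 1 := by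
    show (inner ℝ (p i₀) (p j₀) : ℝ) - 1 * 1 = _
    ring
  have hip : (inner ℝ (p i₀) (p j₀) : ℝ) < 1 := by
    have h1 : (0:ℝ) < ‖p i₀ - p j₀‖^2 := pow_pos (norm_pos_iff.2 (sub_ne_zero.2 hpne)) 2
    rw [norm_sub_sq_real, hp i₀, hp j₀] at h1
    nlinarith
  have hττ : B τ τ < 0 := by
    rw [hτdef, B_add_left, B_add_right, B_add_right, hBξii, hBξjj, hBξij,
      B_symm (xi p j₀) (xi p i₀), hBξij]
    linarith
  have hτ1 : (0:ℝ) < τ.1 := by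
    show (0:ℝ) < (xi p i₀).1 + (xi p j₀).1
    show (0:ℝ) < 1 + 1
    norm_num
  have hν : 0 < B nb nb := B_pos_of_orth hττ (hnb_orth τ hτV) hnb0
  set ν : ℝ := B nb nb with hνdef
  -- decomposition of Lft w
  obtain ⟨a, R, hR, hrep⟩ := Submodule.mem_span_insert.1 hwW
  have hRV : R ∈ Vsub p := hR
  set Nx : ℝ × E d := Nf (Lft x) with hNxdef
  have hNxV : Nx ∈ Vsub p := hNfV _
  have hwBV : ∀ v ∈ Vsub p, B (Lft w) v = B (Lft x) v := B_eq_on_span hwB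
  have hNeq : Nx = a • Nf (Lft c) + R := by
    have hD : Nx - (a • Nf (Lft c) + R) = 0 := by
      apply hnd _ (Submodule.sub_mem _ hNxV
        (Submodule.add_mem _ (Submodule.smul_mem _ _ (hNfV _)) hRV))
      intro i
      have hv : xi p i ∈ Vsub p := xi_mem_Vsub p i
      rw [B_sub_left, B_add_left, B_smul_left]
      rw [hNf (Lft x) _ hv, hNf (Lft c) _ hv]
      have h1 : B (Lft x) (xi p i) = B (Lft w) (xi p i) := (hwB i).symm
      rw [h1, hrep, B_add_left, B_smul_left]
      ring
    have := sub_eq_zero.1 hD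
    exact this
  have hLw : Lft w = Nx + a • nb := by
    rw [hNeq, hrep, hnbdef]
    module
  refine ⟨a, ?_, hLw⟩
  -- sign argument
  by_contra hneg
  push_neg at hneg
  have ha0 : a ≠ 0 := ne_of_lt hneg
  set Z : ℝ × E d := Nx - a • nb with hZdef
  have hBNxnb : B Nx nb = 0 := (B_symm _ _).trans (hnb_orth Nx hNxV)
  have hBnbNx : B nb Nx = 0 := hnb_orth Nx hNxV
  have hBww : B (Lft w) (Lft w) = -1 := B_Lft_self hwb
  have hexp_w : B (Lft w) (Lft w) = B Nx Nx + a^2 * ν := by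
    rw [hLw]
    simp only [B_add_left, B_add_right, B_smul_left, B_smul_right, hBNxnb, hBnbNx]
    rw [← hνdef]
    ring
  have hZZ : B Z Z = -1 := by
    rw [hZdef]
    simp only [B_sub_left, B_sub_right, B_smul_left, B_smul_right, hBNxnb, hBnbNx]
    rw [← hνdef]
    have : B Nx Nx + a^2 * ν = -1 := by rw [← hexp_w]; exact hBww
    nlinarith [this]
  have hBZτ : B Z τ < 0 := by
    have h1 : B Z τ = B Nx τ := by
      rw [hZdef, B_sub_left, B_smul_left, hnb_orth τ hτV]
      ring
    have h2 : B Nx τ = B (Lft x) τ := hNf (Lft x) τ hτV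
    have h3 : B (Lft x) τ = B (Lft x) (xi p i₀) + B (Lft x) (xi p j₀) := by
      rw [hτdef, B_add_right]
    have h4 : B (Lft x) (xi p i₀) < 0 := by
      show B (Lft x) ((1:ℝ), p i₀) < 0
      rw [B_Lft_xi (hp i₀) hx]
      have := ex_pos (hp i₀) hx
      linarith
    have h5 : B (Lft x) (xi p j₀) < 0 := by
      show B (Lft x) ((1:ℝ), p j₀) < 0
      rw [B_Lft_xi (hp j₀) hx]
      have := ex_pos (hp j₀) hx
      linarith
    rw [h1, h2, h3]
    linarith
  have hZHyp : Hyp Z := ⟨hZZ, fst_pos_of_B_neg hZZ hττ hτ1 hBZτ⟩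
  set z' : E d := Dn Z with hz'def
  have hz'ball : z' ∈ pball d := hZHyp.Dn_mem
  have hLz' : Lft z' = Z := hZHyp.Lft_Dn
  have hz'hull : z' ∈ hullSet (Wsub c p) := by
    refine ⟨hz'ball, ?_⟩
    rw [hLz', hZdef]
    apply Submodule.sub_mem
    · exact Vsub_le_Wsub c p hNxV
    · apply Submodule.smul_mem
      rw [hnbdef]
      apply Submodule.sub_mem
      · exact Submodule.subset_span (Set.mem_insert _ _)
      · exact Vsub_le_Wsub c p (hNfV _)
  have hz'horo : z' ∈ horoInter p x := by
    apply mem_horoInter_of_B hp hx hz'ball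
    intro i
    have hv : xi p i ∈ Vsub p := xi_mem_Vsub p i
    rw [hLz', hZdef, B_sub_left, B_smul_left, hnb_orth _ hv, hNf (Lft x) _ hv]
    ring
  have hz'ne : z' ≠ w := by
    intro h
    have : Lft z' = Lft w := by rw [h]
    rw [hLz', hZdef, hLw] at this
    have h2 : (2 * a) • nb = 0 := by
      have h3 : Nx + a • nb - (Nx - a • nb) = 0 := by rw [← this]; abel
      rw [show Nx + a • nb - (Nx - a • nb) = (2*a) • nb by module] at h3
      exact h3
    rcases smul_eq_zero.1 h2 with h4 | h4
    · exact (by linarith : (2:ℝ)*a ≠ 0) h4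
    · exact hnb0 h4
  have hlt := hmin z' ⟨hz'hull, hz'horo⟩ hz'ne
  have hClt : C c w < C c z' := C_lt_of_dH_lt hc hwb hz'ball hlt
  have hBc : -B (Lft c) (Lft w) < -B (Lft c) (Lft z') := by
    rw [B_Lft hc hwb, B_Lft hc hz'ball]
    simpa using hClt
  have hBcnb : B (Lft c) nb = ν := by
    nth_rewrite 1 [show Lft c = Nf (Lft c) + nb by rw [hnbdef]; abel]
    rw [B_add_left, (B_symm _ _).trans (hnb_orth _ (hNfV (Lft c))), hνdef]
    ring
  have hBcw : B (Lft c) (Lft w) = B (Lft c) Nx + a * ν := by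
    rw [hLw, B_add_right, B_smul_right, hBcnb]
  have hBcz : B (Lft c) (Lft z') = B (Lft c) Nx - a * ν := by
    rw [hLz', hZdef, B_sub_right, B_smul_right, hBcnb]
  rw [hBcw, hBcz] at hBc
  nlinarith [hBc, hν, hneg]

end Horo

namespace Horo
variable {d K : ℕ}

lemma nb_sq_pos {p : Fin K → E d} (hp : ∀ i, ‖p i‖ = 1) {i₀ j₀ : Fin K}
    (hpne : p i₀ ≠ p j₀) {c : E d} (hcV : Lft c ∉ Vsub p)
    (Nf : (ℝ × E d) → (ℝ × E d)) (hNfV : ∀ X, Nf X ∈ Vsub p)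
    (hNf : ∀ X, ∀ v ∈ Vsub p, B (Nf X) v = B X v) :
    0 < B (Lft c - Nf (Lft c)) (Lft c - Nf (Lft c)) := by
  set nb : ℝ × E d := Lft c - Nf (Lft c) with hnbdef
  have hnb_orth : ∀ v ∈ Vsub p, B nb v = 0 := by
    intro v hv
    rw [hnbdef, B_sub_left, hNf (Lft c) v hv]
    ring
  have hnb0 : nb ≠ 0 := by
    intro h
    apply hcV
    rw [sub_eq_zero.1 h]
    exact hNfV _
  set τ : ℝ × E d := xi p i₀ + xi p j₀ with hτdef
  have hτV : τ ∈ Vsub p := Submodule.add_mem _ (xi_mem_Vsub p i₀) (xi_mem_Vsub p j₀)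
  have hBξii : B (xi p i₀) (xi p i₀) = 0 := by
    show (inner ℝ (p i₀) (p i₀) : ℝ) - 1 * 1 = 0
    rw [real_inner_self_eq_norm_sq, hp i₀]; norm_num
  have hBξjj : B (xi p j₀) (xi p j₀) = 0 := by
    show (inner ℝ (p j₀) (p j₀) : ℝ) - 1 * 1 = 0
    rw [real_inner_self_eq_norm_sq, hp j₀]; norm_num
  have hBξij : B (xi p i₀) (xi p j₀) = (inner ℝ (p i₀) (p j₀) : ℝ) - 1 := by
    show (inner ℝ (p i₀) (p j₀) : ℝ) - 1 * 1 = _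
    ring
  have hip : (inner ℝ (p i₀) (p j₀) : ℝ) < 1 := by
    have h1 : (0:ℝ) < ‖p i₀ - p j₀‖^2 := pow_pos (norm_pos_iff.2 (sub_ne_zero.2 hpne)) 2
    rw [norm_sub_sq_real, hp i₀, hp j₀] at h1
    nlinarith
  have hττ : B τ τ < 0 := by
    rw [hτdef, B_add_left, B_add_right, B_add_right, hBξii, hBξjj, hBξij,
      B_symm (xi p j₀) (xi p i₀), hBξij]
    linarith
  exact B_pos_of_orth hττ (hnb_orth τ hτV) hnb0

end Horo

open Horo in
theorem horo_proj_base_point_independent'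
    {d K : ℕ} (hK : 0 < K) (b b' : E d) (p : Fin K → E d)
    (hb : b ∈ pball d) (hb' : b' ∈ pball d)
    (hp : ∀ i, ‖p i‖ = 1)
    (hbP : b ∉ GH (Set.range p)) (hb'P : b' ∉ GH (Set.range p))
    (hind : ∀ i, p i ∉ closure (GH (Set.range p \ {p i})))
    (π π' : E d → E d)
    (hπ : IsHoroProj b p π) (hπ' : IsHoroProj b' p π') :
    ∀ x ∈ pball d, ∀ y ∈ pball d, dH (π x) (π y) = dH (π' x) (π' y) := by
  intro x hx y hy
  have hGHb : GH (insert b (Set.range p)) = hullSet (Wsub b p) := GH_insert_eq p hp hb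
  have hGHb' : GH (insert b' (Set.range p)) = hullSet (Wsub b' p) := GH_insert_eq p hp hb'
  obtain ⟨hmx, hminx, -⟩ := hπ x hx
  obtain ⟨hmy, hminy, -⟩ := hπ y hy
  obtain ⟨hmx', hminx', -⟩ := hπ' x hx
  obtain ⟨hmy', hminy', -⟩ := hπ' y hy
  rw [hGHb] at hmx hmy hminx hminy
  rw [hGHb'] at hmx' hmy' hminx' hminy'
  obtain ⟨hxhull, hxhoro⟩ := hmx
  obtain ⟨hyhull, hyhoro⟩ := hmy
  obtain ⟨hxhull', hxhoro'⟩ := hmx'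
  obtain ⟨hyhull', hyhoro'⟩ := hmy'
  have hπxb : π x ∈ pball d := hxhull.1
  have hπyb : π y ∈ pball d := hyhull.1
  have hπ'xb : π' x ∈ pball d := hxhull'.1
  have hπ'yb : π' y ∈ pball d := hyhull'.1
  have hπxB : ∀ i, B (Lft (π x)) (xi p i) = B (Lft x) (xi p i) :=
    mem_horoInter_B hp hx hxhoro
  have hπyB : ∀ i, B (Lft (π y)) (xi p i) = B (Lft y) (xi p i) :=
    mem_horoInter_B hp hy hyhoro
  have hπ'xB : ∀ i, B (Lft (π' x)) (xi p i) = B (Lft x) (xi p i) :=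
    mem_horoInter_B hp hx hxhoro'
  have hπ'yB : ∀ i, B (Lft (π' y)) (xi p i) = B (Lft y) (xi p i) :=
    mem_horoInter_B hp hy hyhoro'
  have hdHf : ∀ u v : E d, u ∈ pball d → v ∈ pball d →
      dH u v = arcosh (-B (Lft u) (Lft v)) := by
    intro u v hu hv
    rw [dH_eq_arcosh, B_Lft hu hv, neg_neg]
  suffices hBB : B (Lft (π x)) (Lft (π y)) = B (Lft (π' x)) (Lft (π' y)) by
    rw [hdHf _ _ hπxb hπyb, hdHf _ _ hπ'xb hπ'yb, hBB]
  by_cases hcase : ∀ i j : Fin K, p i = p j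
  · -- degenerate case: all ideal points coincide
    set i₀ : Fin K := ⟨0, hK⟩ with hi₀
    set ξ₀ : ℝ × E d := xi p i₀ with hξ₀
    have hrange : Set.range (xi p) = {ξ₀} := by
      apply Set.eq_singleton_iff_unique_mem.2
      refine ⟨⟨i₀, rfl⟩, ?_⟩
      rintro _ ⟨i, rfl⟩
      show xi p i = ξ₀
      rw [hξ₀]
      unfold xi
      rw [hcase i i₀]
    have hWb : Wsub b p = Submodule.span ℝ {Lft b, ξ₀} := by rw [Wsub, hrange]
    have hWb' : Wsub b' p = Submodule.span ℝ {Lft b', ξ₀} := by rw [Wsub, hrange]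
    have hBξξ : B ξ₀ ξ₀ = 0 := by
      rw [hξ₀]
      show (inner ℝ (p i₀) (p i₀) : ℝ) - 1 * 1 = 0
      rw [real_inner_self_eq_norm_sq, hp i₀]; norm_num
    have he : B (Lft b) ξ₀ < 0 := by
      rw [hξ₀]
      show B (Lft b) ((1:ℝ), p i₀) < 0
      rw [B_Lft_xi (hp i₀) hb]
      linarith [ex_pos (hp i₀) hb]
    have he' : B (Lft b') ξ₀ < 0 := by
      rw [hξ₀]
      show B (Lft b') ((1:ℝ), p i₀) < 0
      rw [B_Lft_xi (hp i₀) hb']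
      linarith [ex_pos (hp i₀) hb']
    have hcx : B (Lft x) ξ₀ < 0 := by
      rw [hξ₀]
      show B (Lft x) ((1:ℝ), p i₀) < 0
      rw [B_Lft_xi (hp i₀) hx]
      linarith [ex_pos (hp i₀) hx]
    have hcy : B (Lft y) ξ₀ < 0 := by
      rw [hξ₀]
      show B (Lft y) ((1:ℝ), p i₀) < 0
      rw [B_Lft_xi (hp i₀) hy]
      linarith [ex_pos (hp i₀) hy]
    have key : ∀ (e lx ax ly ay : ℝ), lx * e ≠ 0 → ly * e ≠ 0 →
        (-lx^2 + 2*(lx*(ax*e)) = -1) → (-ly^2 + 2*(ly*(ay*e)) = -1) →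
        -(lx*ly) + (lx*ay + ly*ax)*e
          = -((lx*e)^2 + (ly*e)^2)/(2*((lx*e)*(ly*e))) := by
      intro e lx ax ly ay hlx hly h2x h2y
      rw [eq_div_iff (by
        intro h
        rcases mul_eq_zero.1 h with h | h
        · norm_num at h
        · exact (mul_ne_zero hlx hly) h)]
      linear_combination (e^2*ly^2) * h2x + (e^2*lx^2) * h2y
    -- decompositions
    obtain ⟨lx, ax, hUx⟩ := Submodule.mem_span_pair.1 (hWb ▸ hxhull.2)
    obtain ⟨ly, ay, hUy⟩ := Submodule.mem_span_pair.1 (hWb ▸ hyhull.2)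
    obtain ⟨lx', ax', hUx'⟩ := Submodule.mem_span_pair.1 (hWb' ▸ hxhull'.2)
    obtain ⟨ly', ay', hUy'⟩ := Submodule.mem_span_pair.1 (hWb' ▸ hyhull'.2)
    have hBbb : B (Lft b) (Lft b) = -1 := B_Lft_self hb
    have hBbb' : B (Lft b') (Lft b') = -1 := B_Lft_self hb'
    have hξb : B ξ₀ (Lft b) = B (Lft b) ξ₀ := B_symm _ _
    have hξb' : B ξ₀ (Lft b') = B (Lft b') ξ₀ := B_symm _ _
    -- the constraints
    have h1x : lx * B (Lft b) ξ₀ = B (Lft x) ξ₀ := by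
      have h := hπxB i₀
      rw [← hξ₀] at h
      rw [← hUx] at h
      rw [B_add_left, B_smul_left, B_smul_left, hBξξ] at h
      linarith
    have h1y : ly * B (Lft b) ξ₀ = B (Lft y) ξ₀ := by
      have h := hπyB i₀
      rw [← hξ₀] at h
      rw [← hUy] at h
      rw [B_add_left, B_smul_left, B_smul_left, hBξξ] at h
      linarith
    have h1x' : lx' * B (Lft b') ξ₀ = B (Lft x) ξ₀ := by
      have h := hπ'xB i₀
      rw [← hξ₀] at h
      rw [← hUx'] at h
      rw [B_add_left, B_smul_left, B_smul_left, hBξξ] at h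
      linarith
    have h1y' : ly' * B (Lft b') ξ₀ = B (Lft y) ξ₀ := by
      have h := hπ'yB i₀
      rw [← hξ₀] at h
      rw [← hUy'] at h
      rw [B_add_left, B_smul_left, B_smul_left, hBξξ] at h
      linarith
    have h2x : -lx^2 + 2*(lx*(ax*B (Lft b) ξ₀)) = -1 := by
      have h := B_Lft_self hπxb
      rw [← hUx] at h
      simp only [B_add_left, B_add_right, B_smul_left, B_smul_right, hBbb, hBξξ, hξb] at h
      linear_combination h
    have h2y : -ly^2 + 2*(ly*(ay*B (Lft b) ξ₀)) = -1 := by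
      have h := B_Lft_self hπyb
      rw [← hUy] at h
      simp only [B_add_left, B_add_right, B_smul_left, B_smul_right, hBbb, hBξξ, hξb] at h
      linear_combination h
    have h2x' : -lx'^2 + 2*(lx'*(ax'*B (Lft b') ξ₀)) = -1 := by
      have h := B_Lft_self hπ'xb
      rw [← hUx'] at h
      simp only [B_add_left, B_add_right, B_smul_left, B_smul_right, hBbb', hBξξ, hξb'] at h
      linear_combination h
    have h2y' : -ly'^2 + 2*(ly'*(ay'*B (Lft b') ξ₀)) = -1 := by
      have h := B_Lft_self hπ'yb
      rw [← hUy'] at h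
      simp only [B_add_left, B_add_right, B_smul_left, B_smul_right, hBbb', hBξξ, hξb'] at h
      linear_combination h
    -- compute both sides
    have hBUV : B (Lft (π x)) (Lft (π y)) = -(lx*ly) + (lx*ay + ly*ax)*B (Lft b) ξ₀ := by
      rw [← hUx, ← hUy]
      simp only [B_add_left, B_add_right, B_smul_left, B_smul_right, hBbb, hBξξ, hξb]
      ring
    have hBUV' : B (Lft (π' x)) (Lft (π' y)) = -(lx'*ly') + (lx'*ay' + ly'*ax')*B (Lft b') ξ₀ := by
      rw [← hUx', ← hUy']
      simp only [B_add_left, B_add_right, B_smul_left, B_smul_right, hBbb', hBξξ, hξb']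
      ring
    have hval : B (Lft (π x)) (Lft (π y))
        = -((B (Lft x) ξ₀)^2 + (B (Lft y) ξ₀)^2)/(2*((B (Lft x) ξ₀)*(B (Lft y) ξ₀))) := by
      rw [hBUV, ← h1x, ← h1y]
      exact key _ _ _ _ _ (h1x ▸ hcx.ne) (h1y ▸ hcy.ne) h2x h2y
    have hval' : B (Lft (π' x)) (Lft (π' y))
        = -((B (Lft x) ξ₀)^2 + (B (Lft y) ξ₀)^2)/(2*((B (Lft x) ξ₀)*(B (Lft y) ξ₀))) := by
      rw [hBUV', ← h1x', ← h1y']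
      exact key _ _ _ _ _ (h1x' ▸ hcx.ne) (h1y' ▸ hcy.ne) h2x' h2y'
    rw [hval, hval']
  · -- main case: two distinct ideal points
    push_neg at hcase
    obtain ⟨i₀, j₀, hpne⟩ := hcase
    have hnd := Vsub_nondeg hp hpne
    obtain ⟨Nf, hNfV, hNf⟩ : ∃ Nf : (ℝ × E d) → (ℝ × E d),
        (∀ X, Nf X ∈ Vsub p) ∧ (∀ X, ∀ v ∈ Vsub p, B (Nf X) v = B X v) := by
      have hnd' : ∀ R ∈ Vsub p, (∀ v ∈ Vsub p, B R v = 0) → R = 0 :=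
        fun R hR h => hnd R hR (fun i => h _ (xi_mem_Vsub p i))
      choose Nf h1 h2 using fun X => exists_proj hnd' X
      exact ⟨Nf, h1, h2⟩
    have hbV : Lft b ∉ Vsub p := fun h => hbP (spine_lower p hp hb h)
    have hb'V : Lft b' ∉ Vsub p := fun h => hb'P (spine_lower p hp hb' h)
    obtain ⟨sx, hsx0, hsx⟩ := case2_decomp hp hpne hb Nf hNfV hNf hx hπxb hxhull.2 hπxB hminx hbV
    obtain ⟨sy, hsy0, hsy⟩ := case2_decomp hp hpne hb Nf hNfV hNf hy hπyb hyhull.2 hπyB hminy hbV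
    obtain ⟨sx', hsx0', hsx'⟩ := case2_decomp hp hpne hb' Nf hNfV hNf hx hπ'xb hxhull'.2 hπ'xB hminx' hb'V
    obtain ⟨sy', hsy0', hsy'⟩ := case2_decomp hp hpne hb' Nf hNfV hNf hy hπ'yb hyhull'.2 hπ'yB hminy' hb'V
    set nb : ℝ × E d := Lft b - Nf (Lft b) with hnbdef
    set nb' : ℝ × E d := Lft b' - Nf (Lft b') with hnb'def
    set Nx : ℝ × E d := Nf (Lft x) with hNxdef
    set Ny : ℝ × E d := Nf (Lft y) with hNydef
    have hν : 0 < B nb nb := nb_sq_pos hp hpne hbV Nf hNfV hNf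
    have hν' : 0 < B nb' nb' := nb_sq_pos hp hpne hb'V Nf hNfV hNf
    have horth : ∀ v ∈ Vsub p, B nb v = 0 := by
      intro v hv
      rw [hnbdef, B_sub_left, hNf (Lft b) v hv]; ring
    have horth' : ∀ v ∈ Vsub p, B nb' v = 0 := by
      intro v hv
      rw [hnb'def, B_sub_left, hNf (Lft b') v hv]; ring
    have hNxV : Nx ∈ Vsub p := hNfV _
    have hNyV : Ny ∈ Vsub p := hNfV _
    have o1 : B Nx nb = 0 := (B_symm _ _).trans (horth Nx hNxV)
    have o2 : B nb Ny = 0 := horth Ny hNyV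
    have o3 : B Nx nb' = 0 := (B_symm _ _).trans (horth' Nx hNxV)
    have o4 : B nb' Ny = 0 := horth' Ny hNyV
    have o5 : B nb Nx = 0 := horth Nx hNxV
    have o6 : B nb' Nx = 0 := horth' Nx hNxV
    have o7 : B Ny nb = 0 := (B_symm _ _).trans (horth Ny hNyV)
    have o8 : B Ny nb' = 0 := (B_symm _ _).trans (horth' Ny hNyV)
    have hBUV : B (Lft (π x)) (Lft (π y)) = B Nx Ny + (sx*sy)*(B nb nb) := by
      rw [hsx, hsy]
      simp only [B_add_left, B_add_right, B_smul_left, B_smul_right, o1, o2, o5, o7]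
      ring
    have hBUV' : B (Lft (π' x)) (Lft (π' y)) = B Nx Ny + (sx'*sy')*(B nb' nb') := by
      rw [hsx', hsy']
      simp only [B_add_left, B_add_right, B_smul_left, B_smul_right, o3, o4, o6, o8]
      ring
    have hUx2 : B Nx Nx + sx^2*(B nb nb) = -1 := by
      have h := B_Lft_self hπxb
      rw [hsx] at h
      simp only [B_add_left, B_add_right, B_smul_left, B_smul_right, o1, o5] at h
      linear_combination h
    have hUy2 : B Ny Ny + sy^2*(B nb nb) = -1 := by
      have h := B_Lft_self hπyb
      rw [hsy] at h
      simp only [B_add_left, B_add_right, B_smul_left, B_smul_right, o2, o7] at h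
      linear_combination h
    have hUx2' : B Nx Nx + sx'^2*(B nb' nb') = -1 := by
      have h := B_Lft_self hπ'xb
      rw [hsx'] at h
      simp only [B_add_left, B_add_right, B_smul_left, B_smul_right, o3, o6] at h
      linear_combination h
    have hUy2' : B Ny Ny + sy'^2*(B nb' nb') = -1 := by
      have h := B_Lft_self hπ'yb
      rw [hsy'] at h
      simp only [B_add_left, B_add_right, B_smul_left, B_smul_right, o4, o8] at h
      linear_combination h
    have hprod : sx*sy*(B nb nb) = sx'*sy'*(B nb' nb') := by
      have e3 : sx^2*(B nb nb) = sx'^2*(B nb' nb') := by linarith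
      have e4 : sy^2*(B nb nb) = sy'^2*(B nb' nb') := by linarith
      have h5 : (sx*sy*(B nb nb))^2 = (sx'*sy'*(B nb' nb'))^2 := by
        have e1 : (sx*sy*(B nb nb))^2 = (sx^2*(B nb nb))*(sy^2*(B nb nb)) := by ring
        have e2 : (sx'*sy'*(B nb' nb'))^2 = (sx'^2*(B nb' nb'))*(sy'^2*(B nb' nb')) := by ring
        rw [e1, e2, e3, e4]
      have hnn : 0 ≤ sx*sy*(B nb nb) := mul_nonneg (mul_nonneg hsx0 hsy0) hν.le
      have hnn' : 0 ≤ sx'*sy'*(B nb' nb') := mul_nonneg (mul_nonneg hsx0' hsy0') hν'.le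
      calc sx*sy*(B nb nb) = Real.sqrt ((sx*sy*(B nb nb))^2) := (Real.sqrt_sq hnn).symm
        _ = Real.sqrt ((sx'*sy'*(B nb' nb'))^2) := by rw [h5]
        _ = sx'*sy'*(B nb' nb') := Real.sqrt_sq hnn'
    rw [hBUV, hBUV', hprod]


/-- Horospherical projections are base-point independent: for two
base points `b, b'` (not lying in the geodesic hull of the ideal points
`p 1, …, p K`) and the corresponding horospherical projections `π`, `π'`, the
projected distances agree: `d_ℍ(π x, π y) = d_ℍ(π' x, π' y)` for all `x, y ∈ ℍ^d`. -/
theorem horo_proj_base_point_independent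
    {d K : ℕ} (hK : 0 < K) (b b' : E d) (p : Fin K → E d)
    (hb : b ∈ pball d) (hb' : b' ∈ pball d)
    (hp : ∀ i, ‖p i‖ = 1)
    (hbP : b ∉ GH (Set.range p)) (hb'P : b' ∉ GH (Set.range p))
    (hind : ∀ i, p i ∉ closure (GH (Set.range p \ {p i})))
    (π π' : E d → E d)
    (hπ : IsHoroProj b p π) (hπ' : IsHoroProj b' p π') :
    ∀ x ∈ pball d, ∀ y ∈ pball d, dH (π x) (π y) = dH (π' x) (π' y) :=
  horo_proj_base_point_independent' hK b b' p hb hb' hp hbP hb'P hind π π' hπ hπ'
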